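/- Clebsch–Gordan rule for the infinite dicyclic group: for every k ≥ 2 there is an isomorphism of Dic∞-representations V_k ⊗ V ≅ V_{k+1} ⊕ V_{k-1}. -/

import Mathlib

open scoped TensorProduct
open Matrix

noncomputable section

/-- `ℂ²`, the standard two-dimensional complex vector space. -/
abbrev V2 : Type := Fin 2 → ℂ

/-- The standard representation of a subgroup `G ≤ GL₂(ℂ)` on `ℂ²`, by matrix-vector
multiplication. -/
def stdRep (G : Subgroup (GL (Fin 2) ℂ)) : Representation ℂ G V2 where
  toFun g := Matrix.toLin' ((g : GL (Fin 2) ℂ) : Matrix (Fin 2) (Fin 2) ℂ)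
  map_one' := by
    simp only [OneMemClass.coe_one, Units.val_one, Matrix.toLin'_one]
    rfl
  map_mul' g h := by
    simp only [MulMemClass.coe_mul, Units.val_mul, Matrix.toLin'_mul]
    rfl

/-- `TPow j` is the `(j+1)`-st tensor power `V^{⊗(j+1)}` of `V = ℂ²`, realized as an
iterated binary tensor product (bundled as an object of `ModuleCat ℂ` so that the
recursion carries its module structure). -/
def TPow : ℕ → ModuleCat ℂ
  | 0 => ModuleCat.of ℂ V2
  | (j + 1) => ModuleCat.of ℂ (TPow j ⊗[ℂ] V2)

/-- The diagonal representation of `G ≤ GL₂(ℂ)` on `TPow j = V^{⊗(j+1)}`. -/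
def TPowRep (G : Subgroup (GL (Fin 2) ℂ)) : (j : ℕ) → Representation ℂ G (TPow j)
  | 0 => stdRep G
  | (j + 1) => (TPowRep G j).tprod (stdRep G)

/-- The basis vector `v_s^{⊗(j+1)}` of `TPow j = V^{⊗(j+1)}`, for `s : Fin 2`. -/
def vpow (s : Fin 2) : (j : ℕ) → TPow j
  | 0 => Pi.single s 1
  | (j + 1) => vpow s j ⊗ₜ[ℂ] Pi.single s 1

/-- The subspace `V_{j+1}` of `V^{⊗(j+1)}` spanned by `v₁^{⊗(j+1)}` and `v₂^{⊗(j+1)}`. -/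
def Vsub (j : ℕ) : Submodule ℂ (TPow j) := Submodule.span ℂ {vpow 0 j, vpow 1 j}

namespace CGaux

def phi (s : Fin 2) : (j : ℕ) → (TPow j →ₗ[ℂ] ℂ)
  | 0 => LinearMap.proj s
  | (j+1) => TensorProduct.lift (((LinearMap.mul ℂ ℂ).comp (phi s j)).compl₂ (LinearMap.proj s))

lemma phi_tmul (s : Fin 2) (j : ℕ) (a : TPow j) (v : V2) :
    phi s (j+1) (a ⊗ₜ[ℂ] v) = phi s j a * v s := rfl

lemma vpow_succ (s : Fin 2) (j : ℕ) : vpow s (j+1) = vpow s j ⊗ₜ[ℂ] Pi.single s 1 := rfl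

lemma phi_vpow (s t : Fin 2) (j : ℕ) : phi s j (vpow t j) = if s = t then 1 else 0 := by
  induction j with
  | zero =>
      show (Pi.single t 1 : V2) s = _
      simp [Pi.single_apply, eq_comm]
  | succ j ih =>
      rw [vpow_succ, phi_tmul, ih, Pi.single_apply]
      by_cases h : s = t <;> simp [h, eq_comm]

lemma vpow_mem (s : Fin 2) (j : ℕ) : vpow s j ∈ Vsub j := by
  fin_cases s
  · exact Submodule.subset_span (Set.mem_insert _ _)
  · exact Submodule.subset_span (Set.mem_insert_of_mem _ rfl)

lemma repr_mem {j : ℕ} {u : TPow j} (hu : u ∈ Vsub j) :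
    u = phi 0 j u • vpow 0 j + phi 1 j u • vpow 1 j := by
  induction hu using Submodule.span_induction with
    | mem x hx =>
        rcases hx with h | h <;> subst h <;> simp [phi_vpow]
    | zero => simp
    | add x y hx hy ihx ihy =>
        rw [map_add, map_add, add_smul, add_smul]
        conv_lhs => rw [ihx, ihy]
        module
    | smul c x hx ih =>
        rw [_root_.map_smul, _root_.map_smul, smul_eq_mul, smul_eq_mul, mul_smul, mul_smul, ← smul_add, ← ih]

  variable {G : Subgroup (GL (Fin 2) ℂ)}

  lemma std_apply (g : G) (v : V2) :
      stdRep G g v = ((g : GL (Fin 2) ℂ) : Matrix (Fin 2) (Fin 2) ℂ).mulVec v := by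
    simp [stdRep, Matrix.toLin'_apply]

  /-- diag matrix form -/
  def IsDiag (g : G) (z : ℂ) : Prop :=
    ((g : GL (Fin 2) ℂ) : Matrix (Fin 2) (Fin 2) ℂ) = !![z, 0; 0, z⁻¹]

  def IsAnti (g : G) (z : ℂ) : Prop :=
    ((g : GL (Fin 2) ℂ) : Matrix (Fin 2) (Fin 2) ℂ) = !![0, -z⁻¹; z, 0]

  lemma std_diag_apply {g : G} {z : ℂ} (hg : IsDiag g z) (v : V2) :
      stdRep G g v = ![z * v 0, z⁻¹ * v 1] := by
    rw [std_apply, hg]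
    funext t
    fin_cases t <;>
      simp [Matrix.mulVec, dotProduct, Fin.sum_univ_two]

  lemma std_anti_apply {g : G} {z : ℂ} (hg : IsAnti g z) (v : V2) :
      stdRep G g v = ![-z⁻¹ * v 1, z * v 0] := by
    rw [std_apply, hg]
    funext t
    fin_cases t <;>
      simp [Matrix.mulVec, dotProduct, Fin.sum_univ_two]

  /-- generic transport lemma for `phi` under the tensor power action. -/
  lemma phi_gen {g : G} {s s' : Fin 2} {c : ℂ}
      (hstd : ∀ v : V2, (stdRep G g v) s = c * v s') :
      ∀ (j : ℕ) (x : TPow j), phi s j (TPowRep G j g x) = c ^ (j+1) * phi s' j x := by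
    intro j
    induction j with
    | zero =>
        intro x
        show (stdRep G g x) s = c ^ 1 * x s'
        rw [hstd x, pow_one]
    | succ j ih =>
        intro x
        show phi s (j+1) ((TensorProduct.map (TPowRep G j g) (stdRep G g)) x)
          = c ^ (j+2) * phi s' (j+1) x
        induction x using TensorProduct.induction_on with
        | zero => exact (phi s (j+1)).map_zero.trans ((mul_zero _).symm.trans (congrArg (c ^ (j+2) * ·) (phi s' (j+1)).map_zero.symm))
        | tmul a v =>
            rw [TensorProduct.map_tmul, phi_tmul, phi_tmul, ih, hstd]
            ring
        | add x y ihx ihy =>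
            erw [map_add, map_add, map_add, ihx, ihy]
            ring

  /-- generic transport lemma for `vpow` under the tensor power action. -/
  lemma vpow_gen {g : G} {s s' : Fin 2} {c : ℂ}
      (hstd : stdRep G g (Pi.single s' 1) = c • (Pi.single s 1 : V2)) :
      ∀ (j : ℕ), TPowRep G j g (vpow s' j) = c ^ (j+1) • vpow s j := by
    intro j
    induction j with
    | zero =>
        show stdRep G g (Pi.single s' 1) = c ^ 1 • (Pi.single s 1 : V2)
        rw [hstd, pow_one]
    | succ j ih =>
        show (TensorProduct.map (TPowRep G j g) (stdRep G g)) (vpow s' j ⊗ₜ[ℂ] Pi.single s' 1)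
          = c ^ (j+2) • (vpow s j ⊗ₜ[ℂ] Pi.single s 1)
        rw [TensorProduct.map_tmul, ih, hstd, TensorProduct.tmul_smul,
          TensorProduct.smul_tmul', smul_smul, ← pow_succ']
        rw [← TensorProduct.smul_tmul']

  /-- coordinate functionals on `TPow j ⊗ V2`. -/
  def psi (s t : Fin 2) (j : ℕ) : (TPow j ⊗[ℂ] V2) →ₗ[ℂ] ℂ :=
    TensorProduct.lift (((LinearMap.mul ℂ ℂ).comp (phi s j)).compl₂ (LinearMap.proj t))

  lemma psi_tmul (s t : Fin 2) (j : ℕ) (a : TPow j) (v : V2) :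
      psi s t j (a ⊗ₜ[ℂ] v) = phi s j a * v t := rfl

  lemma psi_gen {g : G} {s s' t t' : Fin 2} {c d : ℂ} (j : ℕ)
      (hphi : ∀ x : TPow j, phi s j (TPowRep G j g x) = c * phi s' j x)
      (hstd : ∀ v : V2, (stdRep G g v) t = d * v t') :
      ∀ u : TPow j ⊗[ℂ] V2,
        psi s t j (((TPowRep G j).tprod (stdRep G)) g u) = (c * d) * psi s' t' j u := by
    intro u
    show psi s t j ((TensorProduct.map (TPowRep G j g) (stdRep G g)) u) = _
    induction u using TensorProduct.induction_on with
    | zero => simp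
    | tmul a v =>
        rw [TensorProduct.map_tmul, psi_tmul, psi_tmul, hphi, hstd]
        ring
    | add x y ihx ihy =>
        rw [map_add, map_add, map_add, ihx, ihy]
        ring

  /-- concrete single-vector action facts -/
  lemma std_diag_single0 {g : G} {z : ℂ} (hg : IsDiag g z) :
      stdRep G g (Pi.single 0 1) = z • (Pi.single 0 1 : V2) := by
    rw [std_diag_apply hg]; funext t; fin_cases t <;> simp

  lemma std_diag_single1 {g : G} {z : ℂ} (hg : IsDiag g z) :
      stdRep G g (Pi.single 1 1) = z⁻¹ • (Pi.single 1 1 : V2) := by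
    rw [std_diag_apply hg]; funext t; fin_cases t <;> simp

  lemma std_anti_single0 {g : G} {z : ℂ} (hg : IsAnti g z) :
      stdRep G g (Pi.single 0 1) = z • (Pi.single 1 1 : V2) := by
    rw [std_anti_apply hg]; funext t; fin_cases t <;> simp

  lemma std_anti_single1 {g : G} {z : ℂ} (hg : IsAnti g z) :
      stdRep G g (Pi.single 1 1) = (-z⁻¹) • (Pi.single 0 1 : V2) := by
    rw [std_anti_apply hg]; funext t; fin_cases t <;> simp

  lemma std_diag_c0 {g : G} {z : ℂ} (hg : IsDiag g z) (v : V2) :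
      (stdRep G g v) 0 = z * v 0 := by rw [std_diag_apply hg]; rfl

  lemma std_diag_c1 {g : G} {z : ℂ} (hg : IsDiag g z) (v : V2) :
      (stdRep G g v) 1 = z⁻¹ * v 1 := by rw [std_diag_apply hg]; rfl

  lemma std_anti_c0 {g : G} {z : ℂ} (hg : IsAnti g z) (v : V2) :
      (stdRep G g v) 0 = -z⁻¹ * v 1 := by rw [std_anti_apply hg]; rfl

  lemma std_anti_c1 {g : G} {z : ℂ} (hg : IsAnti g z) (v : V2) :
      (stdRep G g v) 1 = z * v 0 := by rw [std_anti_apply hg]; rfl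

lemma classify (θ : ℝ) (X A : GL (Fin 2) ℂ)
    (hX : (X : Matrix (Fin 2) (Fin 2) ℂ) = !![0, -1; 1, 0])
    (hA : (A : Matrix (Fin 2) (Fin 2) ℂ) =
      !![Complex.exp (θ * Complex.I), 0; 0, Complex.exp (-(θ * Complex.I))])
    (hG : G = Subgroup.closure {X, A}) (g : G) :
    (∃ z : ℂ, z ≠ 0 ∧ IsDiag g z) ∨ (∃ z : ℂ, z ≠ 0 ∧ IsAnti g z) := by
  have hmem : (g : GL (Fin 2) ℂ) ∈ Subgroup.closure ({X, A} : Set (GL (Fin 2) ℂ)) := by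
    rw [← hG]; exact g.2
  unfold IsDiag IsAnti
  have key : ∀ x : GL (Fin 2) ℂ, x ∈ Subgroup.closure ({X, A} : Set (GL (Fin 2) ℂ)) →
      (∃ z : ℂ, z ≠ 0 ∧ (x : Matrix (Fin 2) (Fin 2) ℂ) = !![z, 0; 0, z⁻¹]) ∨
      (∃ z : ℂ, z ≠ 0 ∧ (x : Matrix (Fin 2) (Fin 2) ℂ) = !![0, -z⁻¹; z, 0]) := by
    intro x hmemx
    induction hmemx using Subgroup.closure_induction with
    | mem x hx =>
      rcases hx with h | h
      · subst h
        refine Or.inr ⟨1, one_ne_zero, ?_⟩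
        rw [hX]; norm_num
      · subst h
        refine Or.inl ⟨Complex.exp (θ * Complex.I), Complex.exp_ne_zero _, ?_⟩
        rw [hA, ← Complex.exp_neg]
    | one =>
      refine Or.inl ⟨1, one_ne_zero, ?_⟩
      show ((1 : GL (Fin 2) ℂ) : Matrix (Fin 2) (Fin 2) ℂ) = _
      rw [Units.val_one, Matrix.one_fin_two]
      norm_num
    | mul x y hxm hym hx hy =>
      have hmul : ((x * y : GL (Fin 2) ℂ) : Matrix (Fin 2) (Fin 2) ℂ)
          = (x : Matrix (Fin 2) (Fin 2) ℂ) * (y : Matrix (Fin 2) (Fin 2) ℂ) := Units.val_mul x y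
      rcases hx with ⟨z, hz, he⟩ | ⟨z, hz, he⟩ <;> rcases hy with ⟨w, hw, hf⟩ | ⟨w, hw, hf⟩
      · refine Or.inl ⟨z * w, mul_ne_zero hz hw, ?_⟩
        rw [hmul, he, hf, Matrix.mul_fin_two]
        ext i j; fin_cases i <;> fin_cases j <;> field_simp [hz, hw] <;> ring
      · refine Or.inr ⟨z⁻¹ * w, mul_ne_zero (inv_ne_zero hz) hw, ?_⟩
        rw [hmul, he, hf, Matrix.mul_fin_two]
        ext i j; fin_cases i <;> fin_cases j <;> field_simp [hz, hw] <;> ring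
      · refine Or.inr ⟨z * w, mul_ne_zero hz hw, ?_⟩
        rw [hmul, he, hf, Matrix.mul_fin_two]
        ext i j; fin_cases i <;> fin_cases j <;> field_simp [hz, hw] <;> ring
      · refine Or.inl ⟨-z⁻¹ * w, mul_ne_zero (neg_ne_zero.mpr (inv_ne_zero hz)) hw, ?_⟩
        rw [hmul, he, hf, Matrix.mul_fin_two]
        ext i j; fin_cases i <;> fin_cases j <;> field_simp [hz, hw] <;> ring
    | inv x hxm hx =>
      have hinv : ((x⁻¹ : GL (Fin 2) ℂ) : Matrix (Fin 2) (Fin 2) ℂ)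
          = ((x : GL (Fin 2) ℂ) : Matrix (Fin 2) (Fin 2) ℂ)⁻¹ :=
        Matrix.coe_units_inv x
      rcases hx with ⟨z, hz, he⟩ | ⟨z, hz, he⟩
      · refine Or.inl ⟨z⁻¹, inv_ne_zero hz, ?_⟩
        rw [hinv]
        apply Matrix.inv_eq_right_inv
        rw [he, Matrix.mul_fin_two, Matrix.one_fin_two]
        ext i j; fin_cases i <;> fin_cases j <;> field_simp [hz] <;> simp
      · refine Or.inr ⟨-z, neg_ne_zero.mpr hz, ?_⟩
        rw [hinv]
        apply Matrix.inv_eq_right_inv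
        rw [he, Matrix.mul_fin_two, Matrix.one_fin_two]
        ext i j; fin_cases i <;> fin_cases j <;> field_simp [hz] <;> simp
  exact key _ hmem

def iota (m : ℕ) : (↥(Vsub (m+1)) ⊗[ℂ] V2) →ₗ[ℂ] (TPow (m+1) ⊗[ℂ] V2) :=
  TensorProduct.map (Vsub (m+1)).subtype LinearMap.id

lemma iota_tmul (m : ℕ) (u : ↥(Vsub (m+1))) (v : V2) :
    iota m (u ⊗ₜ[ℂ] v) = (↑u : TPow (m+1)) ⊗ₜ[ℂ] v := rfl

def U (s : Fin 2) (m : ℕ) : ↥(Vsub (m+1)) := ⟨vpow s (m+1), vpow_mem s (m+1)⟩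

def W (s : Fin 2) (m : ℕ) : ↥(Vsub m) := ⟨vpow s m, vpow_mem s m⟩

def F1 (m : ℕ) : (↥(Vsub (m+1)) ⊗[ℂ] V2) →ₗ[ℂ] ↥(Vsub (m+2)) :=
  LinearMap.toSpanSingleton ℂ _ (W 0 (m+2)) ∘ₗ (psi 0 0 (m+1) ∘ₗ iota m)
  + LinearMap.toSpanSingleton ℂ _ (W 1 (m+2)) ∘ₗ (psi 1 1 (m+1) ∘ₗ iota m)

def F2 (m : ℕ) : (↥(Vsub (m+1)) ⊗[ℂ] V2) →ₗ[ℂ] ↥(Vsub m) :=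
  LinearMap.toSpanSingleton ℂ _ (W 0 m) ∘ₗ (psi 0 1 (m+1) ∘ₗ iota m)
  - LinearMap.toSpanSingleton ℂ _ (W 1 m) ∘ₗ (psi 1 0 (m+1) ∘ₗ iota m)

def Fmap (m : ℕ) : (↥(Vsub (m+1)) ⊗[ℂ] V2) →ₗ[ℂ] (↥(Vsub (m+2)) × ↥(Vsub m)) :=
  (F1 m).prod (F2 m)

def Gmap (m : ℕ) : (↥(Vsub (m+2)) × ↥(Vsub m)) →ₗ[ℂ] (↥(Vsub (m+1)) ⊗[ℂ] V2) :=
  (LinearMap.toSpanSingleton ℂ _ ((U 0 m) ⊗ₜ[ℂ] (Pi.single 0 1 : V2))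
      ∘ₗ (phi 0 (m+2) ∘ₗ (Vsub (m+2)).subtype)
    + LinearMap.toSpanSingleton ℂ _ ((U 1 m) ⊗ₜ[ℂ] (Pi.single 1 1 : V2))
      ∘ₗ (phi 1 (m+2) ∘ₗ (Vsub (m+2)).subtype)) ∘ₗ LinearMap.fst ℂ _ _
  + (LinearMap.toSpanSingleton ℂ _ ((U 0 m) ⊗ₜ[ℂ] (Pi.single 1 1 : V2))
      ∘ₗ (phi 0 m ∘ₗ (Vsub m).subtype)
    - LinearMap.toSpanSingleton ℂ _ ((U 1 m) ⊗ₜ[ℂ] (Pi.single 0 1 : V2))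
      ∘ₗ (phi 1 m ∘ₗ (Vsub m).subtype)) ∘ₗ LinearMap.snd ℂ _ _

lemma F1_coe (m : ℕ) (w : ↥(Vsub (m+1)) ⊗[ℂ] V2) :
    (↑(F1 m w) : TPow (m+2)) =
      psi 0 0 (m+1) (iota m w) • vpow 0 (m+2) + psi 1 1 (m+1) (iota m w) • vpow 1 (m+2) := rfl

lemma F2_coe (m : ℕ) (w : ↥(Vsub (m+1)) ⊗[ℂ] V2) :
    (↑(F2 m w) : TPow m) =
      psi 0 1 (m+1) (iota m w) • vpow 0 m - psi 1 0 (m+1) (iota m w) • vpow 1 m := rfl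

lemma Gmap_apply (m : ℕ) (p : ↥(Vsub (m+2))) (q : ↥(Vsub m)) :
    Gmap m (p, q) =
      (phi 0 (m+2) ↑p • ((U 0 m) ⊗ₜ[ℂ] (Pi.single 0 1 : V2))
        + phi 1 (m+2) ↑p • ((U 1 m) ⊗ₜ[ℂ] (Pi.single 1 1 : V2)))
      + (phi 0 m ↑q • ((U 0 m) ⊗ₜ[ℂ] (Pi.single 1 1 : V2))
        - phi 1 m ↑q • ((U 1 m) ⊗ₜ[ℂ] (Pi.single 0 1 : V2))) := rfl

lemma v_repr (v : V2) : v = v 0 • (Pi.single 0 1 : V2) + v 1 • (Pi.single 1 1 : V2) := by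
  funext t; fin_cases t <;> simp

lemma U_coe (s : Fin 2) (m : ℕ) : (↑(U s m) : TPow (m+1)) = vpow s (m+1) := rfl
lemma W_coe (s : Fin 2) (m : ℕ) : (↑(W s m) : TPow m) = vpow s m := rfl

lemma u_repr (m : ℕ) (u : ↥(Vsub (m+1))) :
    u = phi 0 (m+1) ↑u • U 0 m + phi 1 (m+1) ↑u • U 1 m := by
  apply Subtype.ext
  show (u : TPow (m+1)) = phi 0 (m+1) ↑u • vpow 0 (m+1) + phi 1 (m+1) ↑u • vpow 1 (m+1)
  exact repr_mem u.2

lemma hGF_comp (m : ℕ) : (Gmap m).comp (Fmap m) = LinearMap.id := by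
  apply TensorProduct.ext'
  intro u v
  show Gmap m (F1 m (u ⊗ₜ[ℂ] v), F2 m (u ⊗ₜ[ℂ] v)) = u ⊗ₜ[ℂ] v
  have e1 : phi 0 (m+2) ↑(F1 m (u ⊗ₜ[ℂ] v)) = phi 0 (m+1) ↑u * v 0 := by
    rw [F1_coe]
    simp [phi_vpow, iota_tmul, psi_tmul]
  have e2 : phi 1 (m+2) ↑(F1 m (u ⊗ₜ[ℂ] v)) = phi 1 (m+1) ↑u * v 1 := by
    rw [F1_coe]
    simp [phi_vpow, iota_tmul, psi_tmul]
  have e3 : phi 0 m ↑(F2 m (u ⊗ₜ[ℂ] v)) = phi 0 (m+1) ↑u * v 1 := by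
    rw [F2_coe]
    simp [phi_vpow, iota_tmul, psi_tmul]
  have e4 : phi 1 m ↑(F2 m (u ⊗ₜ[ℂ] v)) = -(phi 1 (m+1) ↑u * v 0) := by
    rw [F2_coe]
    simp [phi_vpow, iota_tmul, psi_tmul]
  rw [Gmap_apply, e1, e2, e3, e4]
  conv_rhs => rw [u_repr m u, v_repr v]
  simp only [TensorProduct.add_tmul, TensorProduct.tmul_add, TensorProduct.sub_tmul,
    ← TensorProduct.smul_tmul', TensorProduct.tmul_smul, smul_add, smul_sub, smul_smul]
  module

lemma hFG_comp (m : ℕ) : (Fmap m).comp (Gmap m) = LinearMap.id := by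
  apply LinearMap.ext
  rintro ⟨p, q⟩
  show (F1 m (Gmap m (p, q)), F2 m (Gmap m (p, q))) = (p, q)
  have key : iota m (Gmap m (p, q)) =
      phi 0 (m+2) ↑p • (vpow 0 (m+1) ⊗ₜ[ℂ] (Pi.single 0 1 : V2))
      + phi 1 (m+2) ↑p • (vpow 1 (m+1) ⊗ₜ[ℂ] (Pi.single 1 1 : V2))
      + (phi 0 m ↑q • (vpow 0 (m+1) ⊗ₜ[ℂ] (Pi.single 1 1 : V2))
        - phi 1 m ↑q • (vpow 1 (m+1) ⊗ₜ[ℂ] (Pi.single 0 1 : V2))) := by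
    rw [Gmap_apply]
    simp [iota_tmul, U_coe]
  refine Prod.ext ?_ ?_
  · apply Subtype.ext
    show (↑(F1 m (Gmap m (p, q))) : TPow (m+2)) = ↑p
    rw [F1_coe, key]
    simp only [map_add, map_sub, _root_.map_smul, psi_tmul, phi_vpow, Pi.single_eq_same,
      Pi.single_apply]
    norm_num
    conv_rhs => rw [repr_mem p.2]
  · apply Subtype.ext
    show (↑(F2 m (Gmap m (p, q))) : TPow m) = ↑q
    rw [F2_coe, key]
    simp only [map_add, map_sub, _root_.map_smul, psi_tmul, phi_vpow, Pi.single_eq_same,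
      Pi.single_apply]
    norm_num
    conv_rhs => rw [repr_mem q.2]

end CGaux

open CGaux

/-- Clebsch–Gordan rule for the infinite dicyclic group: for every `k ≥ 2` there is an
isomorphism of `Dic∞`-representations `V_k ⊗ V ≅ V_{k+1} ⊕ V_{k-1}`. -/
theorem clebschGordan_dicyclicInf
    (θ : ℝ) (hθ : Irrational (θ / Real.pi)) (X A : GL (Fin 2) ℂ)
    (hX : (X : Matrix (Fin 2) (Fin 2) ℂ) = !![0, -1; 1, 0])
    (hA : (A : Matrix (Fin 2) (Fin 2) ℂ) =
      !![Complex.exp (θ * Complex.I), 0; 0, Complex.exp (-(θ * Complex.I))])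
    (G : Subgroup (GL (Fin 2) ℂ)) (hG : G = Subgroup.closure {X, A})
    (k : ℕ) (hk : 2 ≤ k) :
    ∃ f : (↥(Vsub (k - 1)) ⊗[ℂ] V2) ≃ₗ[ℂ] (↥(Vsub k) × ↥(Vsub (k - 2))),
      ∀ (g : G) (w w' : ↥(Vsub (k - 1)) ⊗[ℂ] V2),
        ((TPowRep G (k - 1)).tprod (stdRep G)) g
            (TensorProduct.map (Vsub (k - 1)).subtype LinearMap.id w) =
          TensorProduct.map (Vsub (k - 1)).subtype LinearMap.id w' →
        (TPowRep G k g ((f w).1 : TPow k) = ((f w').1 : TPow k) ∧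
          TPowRep G (k - 2) g ((f w).2 : TPow (k - 2)) = ((f w').2 : TPow (k - 2))) := by
  obtain ⟨m, rfl⟩ : ∃ m, k = m + 2 := ⟨k - 2, by omega⟩
  refine ⟨LinearEquiv.ofLinear (Fmap m) (Gmap m) (hFG_comp m) (hGF_comp m), ?_⟩
  intro g w w' H
  have H' : ((TPowRep G (m+1)).tprod (stdRep G)) g (iota m w) = iota m w' := H
  rcases classify θ X A hX hA hG g with ⟨z, hz, hgd⟩ | ⟨z, hz, hga⟩
  · -- diagonal case
    have H00 : psi 0 0 (m+1) (iota m w') = (z ^ (m+2) * z) * psi 0 0 (m+1) (iota m w) := by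
      rw [← H']
      exact psi_gen (m+1) (phi_gen (std_diag_c0 hgd) (m+1)) (std_diag_c0 hgd) _
    have H11 : psi 1 1 (m+1) (iota m w') = (z⁻¹ ^ (m+2) * z⁻¹) * psi 1 1 (m+1) (iota m w) := by
      rw [← H']
      exact psi_gen (m+1) (phi_gen (std_diag_c1 hgd) (m+1)) (std_diag_c1 hgd) _
    have H01 : psi 0 1 (m+1) (iota m w') = (z ^ (m+2) * z⁻¹) * psi 0 1 (m+1) (iota m w) := by
      rw [← H']
      exact psi_gen (m+1) (phi_gen (std_diag_c0 hgd) (m+1)) (std_diag_c1 hgd) _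
    have H10 : psi 1 0 (m+1) (iota m w') = (z⁻¹ ^ (m+2) * z) * psi 1 0 (m+1) (iota m w) := by
      rw [← H']
      exact psi_gen (m+1) (phi_gen (std_diag_c1 hgd) (m+1)) (std_diag_c0 hgd) _
    constructor
    · show TPowRep G (m+2) g (↑(F1 m w) : TPow (m+2)) = (↑(F1 m w') : TPow (m+2))
      rw [F1_coe, F1_coe, map_add, _root_.map_smul, _root_.map_smul,
        vpow_gen (std_diag_single0 hgd) (m+2), vpow_gen (std_diag_single1 hgd) (m+2),
        H00, H11]
      match_scalars <;> field_simp [hz] <;> (try ring) <;> (simp only [inv_pow]; field_simp)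
    · show TPowRep G m g (↑(F2 m w) : TPow m) = (↑(F2 m w') : TPow m)
      rw [F2_coe, F2_coe, map_sub, _root_.map_smul, _root_.map_smul,
        vpow_gen (std_diag_single0 hgd) m, vpow_gen (std_diag_single1 hgd) m,
        H01, H10]
      match_scalars <;> field_simp [hz] <;> (try ring) <;> (simp only [inv_pow]; field_simp)
  · -- antidiagonal case
    have H00 : psi 0 0 (m+1) (iota m w') = ((-z⁻¹) ^ (m+2) * -z⁻¹) * psi 1 1 (m+1) (iota m w) := by
      rw [← H']
      exact psi_gen (m+1) (phi_gen (std_anti_c0 hga) (m+1)) (std_anti_c0 hga) _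
    have H11 : psi 1 1 (m+1) (iota m w') = (z ^ (m+2) * z) * psi 0 0 (m+1) (iota m w) := by
      rw [← H']
      exact psi_gen (m+1) (phi_gen (std_anti_c1 hga) (m+1)) (std_anti_c1 hga) _
    have H01 : psi 0 1 (m+1) (iota m w') = ((-z⁻¹) ^ (m+2) * z) * psi 1 0 (m+1) (iota m w) := by
      rw [← H']
      exact psi_gen (m+1) (phi_gen (std_anti_c0 hga) (m+1)) (std_anti_c1 hga) _
    have H10 : psi 1 0 (m+1) (iota m w') = (z ^ (m+2) * -z⁻¹) * psi 0 1 (m+1) (iota m w) := by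
      rw [← H']
      exact psi_gen (m+1) (phi_gen (std_anti_c1 hga) (m+1)) (std_anti_c0 hga) _
    constructor
    · show TPowRep G (m+2) g (↑(F1 m w) : TPow (m+2)) = (↑(F1 m w') : TPow (m+2))
      rw [F1_coe, F1_coe, map_add, _root_.map_smul, _root_.map_smul,
        vpow_gen (std_anti_single0 hga) (m+2), vpow_gen (std_anti_single1 hga) (m+2),
        H00, H11]
      match_scalars <;> field_simp [hz] <;> (try ring) <;> (simp only [inv_pow]; field_simp)
    · show TPowRep G m g (↑(F2 m w) : TPow m) = (↑(F2 m w') : TPow m)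
      rw [F2_coe, F2_coe, map_sub, _root_.map_smul, _root_.map_smul,
        vpow_gen (std_anti_single0 hga) m, vpow_gen (std_anti_single1 hga) m,
        H01, H10]
      match_scalars <;> field_simp [hz] <;> (try ring) <;> (simp only [inv_pow]; field_simp)
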